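/- arXiv:1710.03710 — 3 statements merged into one kernel-verified Lean document; each statement's English description precedes it below -/
import Mathlib

section
/- Let m be a positive integer, let T : ℝ^m → ℝ^m be a continuous map, and let x ∈ ℝ^m. If the orbit {T^n(x) : n ∈ ℕ} is a bounded set, then the limit set Ω(x) is invariantly connected: Ω(x) is closed, invariant, and is not the union of two nonempty disjoint closed invariant sets. -/
set_option maxHeartbeats 1000000

open Filter Topology

/-- The limit set of a point `x`: all `y` such that `T^[n_k] x → y` along some
sequence `n_k → ∞`. -/
def limitSetPt {α : Type*} [TopologicalSpace α] (T : α → α) (x : α) : Set α :=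
  {y | ∃ n : ℕ → ℕ, Tendsto n atTop atTop ∧
        Tendsto (fun k => T^[n k] x) atTop (𝓝 y)}

lemma limitSetPt_eq_clusterPts {α : Type*} [TopologicalSpace α]
    [FirstCountableTopology α] (T : α → α) (x : α) :
    limitSetPt T x = {y | MapClusterPt y atTop fun n => T^[n] x} := by
  ext y
  constructor
  · rintro ⟨n, hn, hconv⟩
    exact MapClusterPt.of_comp hn hconv.mapClusterPt
  · intro h
    obtain ⟨ψ, hψ, hconv⟩ := TopologicalSpace.FirstCountableTopology.tendsto_subseq h
    exact ⟨ψ, hψ.tendsto_atTop, hconv⟩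

theorem limitSetPt_invariantly_connected_of_bounded_orbit
    (m : ℕ) (hm : 0 < m)
    (T : EuclideanSpace ℝ (Fin m) → EuclideanSpace ℝ (Fin m)) (hT : Continuous T)
    (x : EuclideanSpace ℝ (Fin m))
    (hbdd : Bornology.IsBounded {y | ∃ n : ℕ, y = T^[n] x}) :
    IsClosed (limitSetPt T x) ∧ T '' limitSetPt T x = limitSetPt T x ∧
      ¬ ∃ A B : Set (EuclideanSpace ℝ (Fin m)), A.Nonempty ∧ B.Nonempty ∧ Disjoint A B ∧
        IsClosed A ∧ IsClosed B ∧ T '' A = A ∧ T '' B = B ∧ limitSetPt T x = A ∪ B := by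
  classical
  set u : ℕ → EuclideanSpace ℝ (Fin m) := fun n => T^[n] x with hu
  set K : Set (EuclideanSpace ℝ (Fin m)) := closure {y | ∃ n : ℕ, y = T^[n] x} with hKdef
  have hK : IsCompact K := hbdd.isCompact_closure
  have huK : ∀ n, u n ∈ K := fun n => subset_closure ⟨n, rfl⟩
  have hsucc : ∀ n, u (n + 1) = T (u n) := fun n => Function.iterate_succ_apply' T n x
  -- closedness
  have hclosed : IsClosed (limitSetPt T x) := by
    rw [limitSetPt_eq_clusterPts]
    exact isClosed_setOf_clusterPt
  -- limit set is contained in K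
  have hΩK : limitSetPt T x ⊆ K := by
    rintro y ⟨n, hn, hconv⟩
    exact hK.isClosed.mem_of_tendsto hconv (Eventually.of_forall fun k => huK (n k))
  -- T(Ω) ⊆ Ω
  have hTsub : T '' limitSetPt T x ⊆ limitSetPt T x := by
    rintro _ ⟨y, ⟨n, hn, hconv⟩, rfl⟩
    refine ⟨fun k => n k + 1, tendsto_atTop_mono (fun k => Nat.le_succ _) hn, ?_⟩
    have h1 := (hT.tendsto y).comp hconv
    have heq : (fun k => u (n k + 1)) = T ∘ fun k => T^[n k] x :=
      funext fun k => hsucc (n k)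
    show Tendsto (fun k => u (n k + 1)) atTop (𝓝 (T y))
    rw [heq]
    exact h1
  -- Ω ⊆ T(Ω)
  have hsubT : limitSetPt T x ⊆ T '' limitSetPt T x := by
    rintro y ⟨n, hn, hconv⟩
    obtain ⟨K₀, hK₀⟩ := (hn.eventually (eventually_ge_atTop 1)).exists_forall_of_atTop
    set n' : ℕ → ℕ := fun k => n (k + K₀) - 1 with hn'def
    have hn'succ : ∀ k, n' k + 1 = n (k + K₀) := fun k =>
      Nat.succ_pred_eq_of_pos (hK₀ (k + K₀) (Nat.le_add_left _ _))
    have hn' : Tendsto n' atTop atTop := by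
      rw [tendsto_atTop_atTop]
      intro M
      obtain ⟨N, hN⟩ := (hn.eventually (eventually_ge_atTop (M + 1))).exists_forall_of_atTop
      refine ⟨N, fun k hk => ?_⟩
      have h3 : M + 1 ≤ n (k + K₀) := hN _ (le_trans hk (Nat.le_add_right _ _))
      show M ≤ n (k + K₀) - 1
      omega
    obtain ⟨z, hzK, ψ, hψ, hzconv⟩ := hK.tendsto_subseq (x := fun k => u (n' k))
      (fun k => huK _)
    have hzΩ : z ∈ limitSetPt T x :=
      ⟨fun j => n' (ψ j), hn'.comp hψ.tendsto_atTop, hzconv⟩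
    refine ⟨z, hzΩ, ?_⟩
    have h1 : Tendsto (fun j => T (u (n' (ψ j)))) atTop (𝓝 (T z)) :=
      (hT.tendsto z).comp hzconv
    have h2 : Tendsto (fun j => u (n (ψ j + K₀))) atTop (𝓝 y) :=
      hconv.comp (tendsto_atTop_mono (fun j => Nat.le_add_right (ψ j) K₀)
        hψ.tendsto_atTop)
    have heq : (fun j => T (u (n' (ψ j)))) = fun j => u (n (ψ j + K₀)) := by
      funext j
      rw [← hsucc, hn'succ]
    rw [heq] at h1
    exact tendsto_nhds_unique h1 h2
  have hinv : T '' limitSetPt T x = limitSetPt T x := le_antisymm hTsub hsubT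
  refine ⟨hclosed, hinv, ?_⟩
  rintro ⟨A, B, ⟨a, ha⟩, ⟨b, hb⟩, hAB, hAcl, hBcl, hTA, hTB, hΩ⟩
  -- separation by thickenings
  have hAΩ : A ⊆ limitSetPt T x := hΩ ▸ Set.subset_union_left
  have hBΩ : B ⊆ limitSetPt T x := hΩ ▸ Set.subset_union_right
  have hAcomp : IsCompact A := hK.of_isClosed_subset hAcl (hAΩ.trans hΩK)
  obtain ⟨δ, hδ, hdisj⟩ := hAB.exists_thickenings hAcomp hBcl
  set U := Metric.thickening (δ / 2) A with hUdef
  set V := Metric.thickening (δ / 2) B with hVdef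
  have hUopen : IsOpen U := Metric.isOpen_thickening
  have hVopen : IsOpen V := Metric.isOpen_thickening
  have hAU : A ⊆ U := Metric.self_subset_thickening (half_pos hδ) A
  have hBV : B ⊆ V := Metric.self_subset_thickening (half_pos hδ) B
  have hclU : closure U ⊆ Metric.thickening δ A :=
    (Metric.closure_thickening_subset_cthickening _ _).trans
      (Metric.cthickening_subset_thickening' hδ (half_lt_self hδ) A)
  have hclV : closure V ⊆ Metric.thickening δ B :=
    (Metric.closure_thickening_subset_cthickening _ _).trans
      (Metric.cthickening_subset_thickening' hδ (half_lt_self hδ) B)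
  have hBclU : Disjoint B (closure U) :=
    Disjoint.mono (Metric.self_subset_thickening hδ B) hclU hdisj.symm
  have hAclV : Disjoint A (closure V) :=
    Disjoint.mono (Metric.self_subset_thickening hδ A) hclV hdisj
  -- eventually the orbit is in U ∪ V
  have hev : ∀ᶠ n in atTop, u n ∈ U ∪ V := by
    by_contra hc
    rw [not_eventually] at hc
    have hc' : ∃ᶠ n in atTop, u n ∈ K ∩ (U ∪ V)ᶜ :=
      hc.mono fun n hn => ⟨huK n, hn⟩
    have hscomp : IsCompact (K ∩ (U ∪ V)ᶜ) :=
      hK.inter_right (hUopen.union hVopen).isClosed_compl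
    obtain ⟨p, hp, φ, hφ, hpconv⟩ := hscomp.isSeqCompact.subseq_of_frequently_in hc'
    have hpΩ : p ∈ limitSetPt T x := ⟨φ, hφ.tendsto_atTop, hpconv⟩
    have : p ∈ U ∪ V := by
      rcases hΩ ▸ hpΩ with h | h
      · exact Or.inl (hAU h)
      · exact Or.inr (hBV h)
    exact hp.2 this
  -- the orbit is frequently in U and frequently in V
  have hfreq : ∀ (W : Set (EuclideanSpace ℝ (Fin m))), IsOpen W →
      ∀ c ∈ limitSetPt T x, c ∈ W → ∃ᶠ n in atTop, u n ∈ W := by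
    rintro W hW c ⟨n, hn, hconv⟩ hcW
    rw [frequently_atTop]
    intro N
    have h1 : ∀ᶠ k in atTop, u (n k) ∈ W := hconv.eventually (hW.mem_nhds hcW)
    have h2 : ∀ᶠ k in atTop, N ≤ n k := hn.eventually (eventually_ge_atTop N)
    obtain ⟨k, hk1, hk2⟩ := (h2.and h1).exists
    exact ⟨n k, hk1, hk2⟩
  have hfreqU : ∃ᶠ n in atTop, u n ∈ U := hfreq U hUopen a (hAΩ ha) (hAU ha)
  have hfreqV : ∃ᶠ n in atTop, u n ∈ V := hfreq V hVopen b (hBΩ hb) (hBV hb)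
  have hUV : Disjoint U V :=
    hdisj.mono (Metric.thickening_mono (half_le_self hδ.le) A)
      (Metric.thickening_mono (half_le_self hδ.le) B)
  -- frequently there is a transition from U to V
  have htrans : ∃ᶠ n in atTop, u n ∈ U ∧ u (n + 1) ∈ V := by
    rw [frequently_atTop]
    intro M
    obtain ⟨N₀, hN₀⟩ := hev.exists_forall_of_atTop
    obtain ⟨n₁, hn₁M, hn₁U⟩ := frequently_atTop.mp hfreqU (max M N₀)
    obtain ⟨n₂, hn₂, hn₂V⟩ := frequently_atTop.mp hfreqV (n₁ + 1)
    have hex : ∃ k, n₁ < k ∧ u k ∈ V := ⟨n₂, by omega, hn₂V⟩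
    set k₀ := Nat.find hex with hk₀def
    obtain ⟨hk₀gt, hk₀V⟩ := Nat.find_spec hex
    refine ⟨k₀ - 1, by omega, ?_, ?_⟩
    · -- u (k₀ - 1) ∈ U
      have hge : N₀ ≤ k₀ - 1 := by omega
      rcases hN₀ _ hge with h | h
      · exact h
      · -- u (k₀ - 1) ∈ V : contradiction
        exfalso
        rcases Nat.lt_or_ge n₁ (k₀ - 1) with hlt | hge'
        · exact Nat.find_min hex (by omega : k₀ - 1 < k₀) ⟨hlt, h⟩
        · have : k₀ - 1 = n₁ := by omega
          rw [this] at h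
          exact hUV.ne_of_mem hn₁U h rfl
    · have : k₀ - 1 + 1 = k₀ := by omega
      rw [this]
      exact hk₀V
  obtain ⟨φ, hφ, hφmem⟩ := extraction_of_frequently_atTop htrans
  obtain ⟨p, hpK, ψ, hψ, hpconv⟩ := hK.tendsto_subseq (x := fun j => u (φ j))
    (fun j => huK _)
  have hpΩ : p ∈ limitSetPt T x :=
    ⟨fun j => φ (ψ j), hφ.tendsto_atTop.comp hψ.tendsto_atTop, hpconv⟩
  have hpclU : p ∈ closure U :=
    mem_closure_of_tendsto hpconv (Eventually.of_forall fun j => (hφmem (ψ j)).1)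
  have hpA : p ∈ A := by
    rcases hΩ ▸ hpΩ with h | h
    · exact h
    · exact absurd rfl (hBclU.ne_of_mem h hpclU)
  have hTpA : T p ∈ A := hTA ▸ ⟨p, hpA, rfl⟩
  have hTpconv : Tendsto (fun j => u (φ (ψ j) + 1)) atTop (𝓝 (T p)) := by
    have := (hT.tendsto p).comp hpconv
    simpa [hsucc, Function.comp_def] using this
  have hTpclV : T p ∈ closure V :=
    mem_closure_of_tendsto hTpconv (Eventually.of_forall fun j => (hφmem (ψ j)).2)
  exact hAclV.ne_of_mem hTpA hTpclV rfl
end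

section
/- (Discrete-time LaSalle invariance principle) Let m be a positive integer, let G ⊆ ℝ^m, and let T : ℝ^m → ℝ^m be continuous on the closure of G. Suppose V : ℝ^m → ℝ satisfies: (i) V is continuous on the closure of G; (ii) V(T(x)) − V(x) ≤ 0 for all x ∈ G. Let x_0 ∈ G and define x(n) = T^n(x_0). If the set ⋃_{n=0}^{∞} {x(n)} is bounded and x(n) ∈ G for all n ∈ ℕ, then there exists c ∈ ℝ such that dist(x(n), M ∩ V^{-1}(c)) → 0 as n → ∞, where V^{-1}(c) = {x ∈ ℝ^m : V(x) = c}, E = {x ∈ closure(G) : V(T(x)) − V(x) = 0}, and M is the largest invariant set of T contained in E. -/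
open Filter Topology

/-- Discrete-time LaSalle invariance principle. -/
theorem discrete_time_LaSalle_invariance_principle
    (m : ℕ) (hm : 0 < m)
    (G : Set (EuclideanSpace ℝ (Fin m)))
    (T : EuclideanSpace ℝ (Fin m) → EuclideanSpace ℝ (Fin m))
    (hT : ContinuousOn T (closure G))
    (V : EuclideanSpace ℝ (Fin m) → ℝ) (hV : ContinuousOn V (closure G))
    (hdec : ∀ x ∈ G, V (T x) - V x ≤ 0)
    (x₀ : EuclideanSpace ℝ (Fin m)) (hx₀ : x₀ ∈ G)
    (hbdd : Bornology.IsBounded (⋃ n : ℕ, {T^[n] x₀}))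
    (horbit : ∀ n : ℕ, T^[n] x₀ ∈ G) :
    ∃ c : ℝ, Tendsto
      (fun n : ℕ => Metric.infDist (T^[n] x₀)
        ((⋃₀ {A : Set (EuclideanSpace ℝ (Fin m)) |
            A ⊆ {x ∈ closure G | V (T x) - V x = 0} ∧ T '' A = A}) ∩
          {x | V x = c}))
      atTop (𝓝 0) := by
  set x : ℕ → EuclideanSpace ℝ (Fin m) := fun n => T^[n] x₀ with hxdef
  set K := closure (Set.range x) with hKdef
  have hrangeG : Set.range x ⊆ G := Set.range_subset_iff.2 horbit
  have hKG : K ⊆ closure G := closure_mono hrangeG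
  have hxK : ∀ n, x n ∈ K := fun n => subset_closure ⟨n, rfl⟩
  have hKcomp : IsCompact K := by
    have hb : Bornology.IsBounded (Set.range x) := by
      have : (⋃ n : ℕ, {T^[n] x₀}) = Set.range x := by
        ext y; simp [hxdef]
      rwa [this] at hbdd
    exact Metric.isCompact_iff_isClosed_bounded.2 ⟨isClosed_closure, hb.closure⟩
  -- the omega-limit set
  set ω : Set (EuclideanSpace ℝ (Fin m)) :=
    {y | ∃ φ : ℕ → ℕ, StrictMono φ ∧ Tendsto (fun k => x (φ k)) atTop (𝓝 y)} with hωdef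
  have hωK : ω ⊆ K := by
    rintro y ⟨φ, hφ, htend⟩
    exact isClosed_closure.mem_of_tendsto htend (Eventually.of_forall fun k => hxK _)
  have hωG : ω ⊆ closure G := hωK.trans hKG
  -- subsequence extraction into ω
  have hsub : ∀ φ : ℕ → ℕ, StrictMono φ → ∃ y ∈ ω, ∃ ψ : ℕ → ℕ, StrictMono ψ ∧
      Tendsto (fun k => x (φ (ψ k))) atTop (𝓝 y) := by
    intro φ hφ
    obtain ⟨y, hyK, ψ, hψ, htend⟩ := hKcomp.tendsto_subseq (x := fun k => x (φ k))
      (fun k => hxK _)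
    exact ⟨y, ⟨φ ∘ ψ, hφ.comp hψ, htend⟩, ψ, hψ, htend⟩
  obtain ⟨y₀, hy₀, -⟩ := hsub id strictMono_id
  have hωne : ω.Nonempty := ⟨y₀, hy₀⟩
  -- the value of V along the orbit decreases to c
  set v : ℕ → ℝ := fun n => V (x n) with hvdef
  have hanti : Antitone v := antitone_nat_of_succ_le fun n => by
    have h1 : x (n + 1) = T (x n) := Function.iterate_succ_apply' T n x₀
    have := hdec (x n) (horbit n)
    simp only [hvdef, h1]
    linarith
  have hbb : BddBelow (Set.range v) := by
    have hVK : ContinuousOn V K := hV.mono hKG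
    have : Set.range v ⊆ V '' K := by
      rintro r ⟨n, rfl⟩; exact ⟨x n, hxK n, rfl⟩
    exact ((hKcomp.image_of_continuousOn hVK).bddBelow).mono this
  set c : ℝ := ⨅ n, v n with hcdef
  have hvc : Tendsto v atTop (𝓝 c) := tendsto_atTop_ciInf hanti hbb
  -- convergence within closure G
  have htendIn : ∀ (u : ℕ → ℕ) (y : EuclideanSpace ℝ (Fin m)),
      Tendsto (fun k => x (u k)) atTop (𝓝 y) →
      Tendsto (fun k => x (u k)) atTop (𝓝[closure G] y) := by
    intro u y h
    rw [tendsto_nhdsWithin_iff]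
    exact ⟨h, Eventually.of_forall fun k => subset_closure (horbit _)⟩
  -- V is constantly c on ω
  have hVω : ∀ y ∈ ω, V y = c := by
    rintro y ⟨φ, hφ, htend⟩
    have h1 : Tendsto (fun k => v (φ k)) atTop (𝓝 c) := hvc.comp hφ.tendsto_atTop
    have h2 : Tendsto (fun k => V (x (φ k))) atTop (𝓝 (V y)) :=
      (hV y (hωG ⟨φ, hφ, htend⟩)).tendsto.comp (htendIn φ y htend)
    exact tendsto_nhds_unique h2 h1
  -- T maps ω into ω
  have hTω : ∀ y ∈ ω, T y ∈ ω := by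
    rintro y ⟨φ, hφ, htend⟩
    have h2 : Tendsto (fun k => T (x (φ k))) atTop (𝓝 (T y)) :=
      (hT y (hωG ⟨φ, hφ, htend⟩)).tendsto.comp (htendIn φ y htend)
    have h3 : ∀ k, T (x (φ k)) = x (φ k + 1) := fun k =>
      (Function.iterate_succ_apply' T (φ k) x₀).symm
    refine ⟨fun k => φ k + 1, fun a b hab => by simpa using hφ hab, ?_⟩
    simpa only [h3] using h2
  -- ω ⊆ T '' ω
  have hωT : ∀ y ∈ ω, y ∈ T '' ω := by
    rintro y ⟨φ, hφ, htend⟩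
    have hφ1 : ∀ k, 1 ≤ φ (k + 1) := fun k => le_trans (by omega) (hφ.le_apply)
    obtain ⟨z, hzK, ψ, hψ, htz⟩ := hKcomp.tendsto_subseq
      (x := fun k => x (φ (k + 1) - 1)) (fun k => hxK _)
    have hχ : StrictMono (fun j => φ (ψ j + 1) - 1) := by
      intro a b hab
      have h1 : φ (ψ a + 1) < φ (ψ b + 1) := hφ (by have := hψ hab; omega)
      have h2 := hφ1 (ψ a)
      show φ (ψ a + 1) - 1 < φ (ψ b + 1) - 1
      omega
    have hzω : z ∈ ω := ⟨fun j => φ (ψ j + 1) - 1, hχ, htz⟩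
    refine ⟨z, hzω, ?_⟩
    -- T z = y
    have h2 : Tendsto (fun j => T (x (φ (ψ j + 1) - 1))) atTop (𝓝 (T z)) :=
      (hT z (hωG hzω)).tendsto.comp (htendIn _ z htz)
    have h3 : ∀ j, T (x (φ (ψ j + 1) - 1)) = x (φ (ψ j + 1)) := by
      intro j
      conv_rhs => rw [show φ (ψ j + 1) = (φ (ψ j + 1) - 1) + 1 by have := hφ1 (ψ j); omega]
      exact (Function.iterate_succ_apply' T _ x₀).symm
    have h5 : Tendsto (fun j => x (φ (ψ j + 1))) atTop (𝓝 y) :=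
      htend.comp ((tendsto_add_atTop_nat 1).comp hψ.tendsto_atTop)
    rw [show (fun j => T (x (φ (ψ j + 1) - 1))) = fun j => x (φ (ψ j + 1)) from
      funext h3] at h2
    exact tendsto_nhds_unique h2 h5
  have himg : T '' ω = ω :=
    Set.Subset.antisymm (by rintro _ ⟨y, hy, rfl⟩; exact hTω y hy) (fun y hy => hωT y hy)
  -- ω is contained in the target set
  have hωS : ω ⊆ (⋃₀ {A : Set (EuclideanSpace ℝ (Fin m)) |
      A ⊆ {x ∈ closure G | V (T x) - V x = 0} ∧ T '' A = A}) ∩ {x | V x = c} := by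
    intro y hy
    refine ⟨Set.mem_sUnion.2 ⟨ω, ⟨?_, himg⟩, hy⟩, hVω y hy⟩
    intro z hz
    refine ⟨hωG hz, ?_⟩
    rw [hVω _ (hTω z hz), hVω z hz]
    ring
  -- the orbit converges to ω
  have hattr : Tendsto (fun n => Metric.infDist (x n) ω) atTop (𝓝 0) := by
    by_contra hc
    rw [Metric.tendsto_atTop] at hc
    push_neg at hc
    obtain ⟨ε, hε, hfr⟩ := hc
    have hfreq : ∃ᶠ n in atTop, ε ≤ Metric.infDist (x n) ω := by
      refine frequently_atTop.2 fun N => ?_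
      obtain ⟨n, hn, h2⟩ := hfr N
      refine ⟨n, hn, ?_⟩
      rwa [Real.dist_eq, sub_zero, abs_of_nonneg Metric.infDist_nonneg] at h2
    obtain ⟨φ, hφ, hφε⟩ := Filter.extraction_of_frequently_atTop hfreq
    obtain ⟨y, hyω, ψ, hψ, htend⟩ := hsub φ hφ
    have h1 : Tendsto (fun k => dist (x (φ (ψ k))) y) atTop (𝓝 0) :=
      tendsto_iff_dist_tendsto_zero.mp htend
    have h2 : ∀ k, ε ≤ dist (x (φ (ψ k))) y := fun k =>
      le_trans (hφε (ψ k)) (Metric.infDist_le_dist_of_mem hyω)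
    have := ge_of_tendsto' h1 h2
    linarith
  refine ⟨c, squeeze_zero (fun n => Metric.infDist_nonneg)
    (fun n => Metric.infDist_le_infDist_of_subset hωS hωne) hattr⟩
end

section
/- (Extension of the LaSalle invariance principle) Let m be a positive integer, let G ⊆ ℝ^m, and let T : ℝ^m → ℝ^m be continuous on G. Suppose V : ℝ^m → ℝ satisfies: (i) V is continuous on G; (ii) V(T(x)) − V(x) ≤ 0 for all x ∈ G. Let x_0 ∈ G, define x(n) = T^n(x_0), and suppose there exist a compact set G_c ⊆ G and N ∈ ℕ such that x(n) ∈ G_c for all n ≥ N. Then there exists c ∈ ℝ such that dist(x(n), M ∩ V^{-1}(c)) → 0 as n → ∞, where V^{-1}(c) = {x ∈ ℝ^m : V(x) = c}, E = {x ∈ G_c : V(T(x)) − V(x) = 0}, and M is the largest invariant set of T contained in E. -/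
open Filter Topology

set_option maxHeartbeats 1000000 in
/-- Extension of the discrete-time LaSalle invariance principle. -/
theorem discrete_time_LaSalle_invariance_principle_extension
    (m : ℕ) (hm : 0 < m)
    (G : Set (EuclideanSpace ℝ (Fin m)))
    (T : EuclideanSpace ℝ (Fin m) → EuclideanSpace ℝ (Fin m))
    (hT : ContinuousOn T G)
    (V : EuclideanSpace ℝ (Fin m) → ℝ) (hV : ContinuousOn V G)
    (hdec : ∀ x ∈ G, V (T x) - V x ≤ 0)
    (x₀ : EuclideanSpace ℝ (Fin m)) (hx₀ : x₀ ∈ G)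
    (Gc : Set (EuclideanSpace ℝ (Fin m))) (hGc : Gc ⊆ G) (hGcComp : IsCompact Gc)
    (N : ℕ) (horbit : ∀ n : ℕ, N ≤ n → T^[n] x₀ ∈ Gc) :
    ∃ c : ℝ, Tendsto
      (fun n : ℕ => Metric.infDist (T^[n] x₀)
        ((⋃₀ {A : Set (EuclideanSpace ℝ (Fin m)) |
            A ⊆ {x ∈ Gc | V (T x) - V x = 0} ∧ T '' A = A}) ∩
          {x | V x = c}))
      atTop (𝓝 0) := by
  classical
  set u : ℕ → EuclideanSpace ℝ (Fin m) := fun n => T^[n] x₀ with hu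
  have husucc : ∀ n, u (n + 1) = T (u n) := fun n => Function.iterate_succ_apply' T n x₀
  have hGcClosed : IsClosed Gc := hGcComp.isClosed
  have hmemG : ∀ n, N ≤ n → u n ∈ G := fun n hn => hGc (horbit n hn)
  -- the Lyapunov sequence
  set w : ℕ → ℝ := fun n => V (u (N + n)) with hw
  have hanti : Antitone w := by
    apply antitone_nat_of_succ_le
    intro n
    have h1 : u (N + n) ∈ G := hmemG _ (Nat.le_add_right N n)
    have h2 := hdec _ h1
    have h3 : V (T (u (N + n))) ≤ V (u (N + n)) := by linarith
    show V (u (N + (n + 1))) ≤ V (u (N + n))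
    rw [show N + (n + 1) = (N + n) + 1 from rfl, husucc]
    exact h3
  have hbdd : BddBelow (Set.range w) := by
    have himg : BddBelow (V '' Gc) := hGcComp.bddBelow_image (hV.mono hGc)
    refine himg.mono ?_
    rintro _ ⟨n, rfl⟩
    exact ⟨u (N + n), horbit _ (Nat.le_add_right N n), rfl⟩
  set c : ℝ := ⨅ n, w n with hc
  have hwc : Tendsto w atTop (𝓝 c) := tendsto_atTop_ciInf hanti hbdd
  have hVuc : Tendsto (fun n => V (u n)) atTop (𝓝 c) := by
    rw [← tendsto_add_atTop_iff_nat N]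
    simpa [hw, Nat.add_comm] using hwc
  -- the omega-limit set
  set Om : Set (EuclideanSpace ℝ (Fin m)) :=
    {y | ∃ φ : ℕ → ℕ, StrictMono φ ∧ Tendsto (fun k => u (φ k)) atTop (𝓝 y)} with hOm
  -- main structural fact about limits of subsequences
  have main : ∀ (y : EuclideanSpace ℝ (Fin m)) (φ : ℕ → ℕ), StrictMono φ →
      Tendsto (fun k => u (φ k)) atTop (𝓝 y) →
      y ∈ Gc ∧ V y = c ∧ Tendsto (fun k => u (φ k + 1)) atTop (𝓝 (T y)) := by
    intro y φ hφ htend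
    have hev : ∀ᶠ k in atTop, u (φ k) ∈ Gc := by
      filter_upwards [eventually_ge_atTop N] with k hk
      exact horbit _ (le_trans hk (hφ.le_apply))
    have hyGc : y ∈ Gc := hGcClosed.mem_of_tendsto htend hev
    have htendG : Tendsto (fun k => u (φ k)) atTop (𝓝[G] y) :=
      tendsto_nhdsWithin_iff.mpr ⟨htend, hev.mono fun k h => hGc h⟩
    have hVy : V y = c := by
      have h1 : Tendsto (fun k => V (u (φ k))) atTop (𝓝 (V y)) :=
        ((hV y (hGc hyGc)).tendsto).comp htendG
      have h2 : Tendsto (fun k => V (u (φ k))) atTop (𝓝 c) :=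
        hVuc.comp hφ.tendsto_atTop
      exact tendsto_nhds_unique h1 h2
    refine ⟨hyGc, hVy, ?_⟩
    have h3 : Tendsto (fun k => T (u (φ k))) atTop (𝓝 (T y)) :=
      ((hT y (hGc hyGc)).tendsto).comp htendG
    simpa [husucc] using h3
  have hOmGc : Om ⊆ Gc := by
    rintro y ⟨φ, hφ, htend⟩
    exact (main y φ hφ htend).1
  have hVOm : ∀ y ∈ Om, V y = c := by
    rintro y ⟨φ, hφ, htend⟩
    exact (main y φ hφ htend).2.1
  have hTOm : ∀ y ∈ Om, T y ∈ Om := by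
    rintro y ⟨φ, hφ, htend⟩
    exact ⟨fun k => φ k + 1, fun a b hab => by simpa using hφ hab,
      (main y φ hφ htend).2.2⟩
  -- Om ⊆ T '' Om
  have hOmsur : ∀ y ∈ Om, ∃ z ∈ Om, T z = y := by
    rintro y ⟨φ, hφ, htend⟩
    set φ₁ : ℕ → ℕ := fun k => φ (k + (N + 1)) with hφ₁def
    have hφ₁ : StrictMono φ₁ := fun a b hab => hφ (by omega)
    have hφ₁ge : ∀ k, N + 1 ≤ φ₁ k := fun k =>
      le_trans (by omega) (hφ.le_apply (x := k + (N + 1)))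
    have hmem : ∀ k, u (φ₁ k - 1) ∈ Gc := fun k => horbit _ (by have := hφ₁ge k; omega)
    obtain ⟨z, hzGc, ψ, hψ, hza⟩ := hGcComp.tendsto_subseq hmem
    set χ : ℕ → ℕ := fun j => φ₁ (ψ j) - 1 with hχdef
    have hχ : StrictMono χ := by
      intro a b hab
      have h1 := hφ₁ (hψ hab)
      have h2 := hφ₁ge (ψ a)
      simp only [hχdef]
      omega
    have hzχ : Tendsto (fun j => u (χ j)) atTop (𝓝 z) := hza
    have hz := main z χ hχ hzχ
    refine ⟨z, ⟨χ, hχ, hzχ⟩, ?_⟩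
    -- u (χ j + 1) = u (φ₁ (ψ j)) tends to both T z and y
    have heq : ∀ j, χ j + 1 = φ₁ (ψ j) := by
      intro j
      have := hφ₁ge (ψ j)
      simp only [hχdef]
      omega
    have h1 : Tendsto (fun j => u (φ₁ (ψ j))) atTop (𝓝 (T z)) := by
      have := hz.2.2
      simpa [heq] using this
    have h2 : Tendsto (fun j => u (φ₁ (ψ j))) atTop (𝓝 y) := by
      have hidx : Tendsto (fun j => ψ j + (N + 1)) atTop atTop :=
        (tendsto_add_atTop_nat (N + 1)).comp hψ.tendsto_atTop
      exact htend.comp hidx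
    exact tendsto_nhds_unique h1 h2
  have hTOmeq : T '' Om = Om := by
    apply Set.eq_of_subset_of_subset
    · rintro _ ⟨y, hy, rfl⟩; exact hTOm y hy
    · intro y hy
      obtain ⟨z, hz, hzy⟩ := hOmsur y hy
      exact ⟨z, hz, hzy⟩
  -- Om is nonempty
  have hOmne : Om.Nonempty := by
    have hmem : ∀ k, u (k + N) ∈ Gc := fun k => horbit _ (Nat.le_add_left N k)
    obtain ⟨z, hzGc, ψ, hψ, hza⟩ := hGcComp.tendsto_subseq hmem
    exact ⟨z, fun j => ψ j + N, fun a b hab => Nat.add_lt_add_right (hψ hab) N, hza⟩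
  -- Om is contained in the target set
  have hOmsub : Om ⊆ (⋃₀ {A : Set (EuclideanSpace ℝ (Fin m)) |
      A ⊆ {x ∈ Gc | V (T x) - V x = 0} ∧ T '' A = A}) ∩ {x | V x = c} := by
    intro y hy
    refine ⟨⟨Om, ⟨?_, hTOmeq⟩, hy⟩, hVOm y hy⟩
    intro x hx
    refine ⟨hOmGc hx, ?_⟩
    have h1 := hVOm x hx
    have h2 := hVOm _ (hTOm x hx)
    simp [h1, h2]
  -- dist of orbit to Om tends to 0
  have htendOm : Tendsto (fun n => Metric.infDist (u n) Om) atTop (𝓝 0) := by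
    by_contra hcon
    rw [Metric.tendsto_atTop] at hcon
    push_neg at hcon
    obtain ⟨ε, hε, hfreq⟩ := hcon
    have hfreq' : ∃ᶠ n in atTop, ε ≤ Metric.infDist (u n) Om := by
      rw [frequently_atTop]
      intro M
      obtain ⟨n, hn, hdist⟩ := hfreq M
      refine ⟨n, hn, ?_⟩
      rwa [Real.dist_eq, sub_zero, abs_of_nonneg Metric.infDist_nonneg] at hdist
    obtain ⟨φ, hφ, hφbd⟩ := extraction_of_frequently_atTop hfreq'
    set φ₁ : ℕ → ℕ := fun k => φ (k + N) with hφ₁def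
    have hφ₁ : StrictMono φ₁ := fun a b hab => hφ (by omega)
    have hmem : ∀ k, u (φ₁ k) ∈ Gc := fun k =>
      horbit _ (le_trans (Nat.le_add_left N k) (hφ.le_apply (x := k + N)))
    obtain ⟨z, hzGc, ψ, hψ, hza⟩ := hGcComp.tendsto_subseq hmem
    have hzOm : z ∈ Om := ⟨fun j => φ₁ (ψ j), hφ₁.comp hψ, hza⟩
    have hlim : Tendsto (fun j => Metric.infDist (u (φ₁ (ψ j))) Om) atTop
        (𝓝 (Metric.infDist z Om)) :=
      ((Metric.continuous_infDist_pt Om).tendsto z).comp hza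
    have hzero : Metric.infDist z Om = 0 := Metric.infDist_zero_of_mem hzOm
    have hge : ε ≤ Metric.infDist z Om :=
      ge_of_tendsto hlim (Eventually.of_forall fun j => hφbd (ψ j + N))
    rw [hzero] at hge
    linarith
  refine ⟨c, ?_⟩
  apply squeeze_zero (fun n => Metric.infDist_nonneg)
    (fun n => Metric.infDist_le_infDist_of_subset hOmsub hOmne) htendOm
end
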